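/- For every integer p ≥ 1, all integers k, s with 1 ≤ k ≤ 2p−1 and 0 ≤ s ≤ k, every real number q, and every integer l with −p+1 ≤ l ≤ p, one has ∑_{j=−p+1}^{p} γ^{s,q}_{p,j} · γ^{k−s,j}_{p,l} = γ^{k,q}_{p,l}, where γ^{k−s,j}_{p,l} denotes the weight with evaluation point the integer j. -/
import Mathlib

/-- Lagrange basis polynomial `G_{p,j}` on nodes `-p+1, …, p`. -/
noncomputable def Gpoly (p : ℕ) (j : ℤ) (x : ℝ) : ℝ :=
  ∏ r ∈ (Finset.Icc (-(p:ℤ)+1) (p:ℤ)).erase j, (x - (r:ℝ)) / ((j:ℝ) - (r:ℝ))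

/-- `γ^{k,q}_{p,j} = G_{p,j}^{(k)}(q)`. -/
noncomputable def gam (p k : ℕ) (q : ℝ) (j : ℤ) : ℝ := iteratedDeriv k (Gpoly p j) q

open Polynomial

lemma iteratedDeriv_polyEval (P : ℝ[X]) (k : ℕ) :
    iteratedDeriv k (fun x => P.eval x) = fun x => (derivative^[k] P).eval x := by
  induction k generalizing P with
  | zero => simp
  | succ n ih =>
    rw [iteratedDeriv_succ']
    have : deriv (fun x => P.eval x) = fun x => (derivative P).eval x := by
      funext x; exact Polynomial.deriv P
    rw [this, ih, Function.iterate_succ_apply]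

lemma degree_iterate_derivative_le (P : ℝ[X]) (m : ℕ) :
    (derivative^[m] P).degree ≤ P.degree := by
  induction m with
  | zero => simp
  | succ n ih =>
    rw [Function.iterate_succ_apply']
    exact le_trans degree_derivative_le ih

lemma Gpoly_eq (p : ℕ) (j : ℤ) :
    Gpoly p j = fun x =>
      (Lagrange.basis (Finset.Icc (-(p:ℤ)+1) (p:ℤ)) (fun i : ℤ => (i : ℝ)) j).eval x := by
  funext x
  unfold Gpoly Lagrange.basis Lagrange.basisDivisor
  rw [eval_prod]
  refine Finset.prod_congr rfl fun r _ => ?_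
  simp [div_eq_mul_inv, mul_comm]

lemma gam_eq (p k : ℕ) (q : ℝ) (j : ℤ) :
    gam p k q j =
      (derivative^[k] (Lagrange.basis (Finset.Icc (-(p:ℤ)+1) (p:ℤ))
        (fun i : ℤ => (i : ℝ)) j)).eval q := by
  unfold gam
  rw [Gpoly_eq, iteratedDeriv_polyEval]

/-- Composition identity for the 2p-point differentiation weights:
∑_{j=-p+1}^{p} γ^{s,q}_{p,j} γ^{k-s,j}_{p,l} = γ^{k,q}_{p,l}. -/
theorem gam_composition (p : ℕ) (hp : 1 ≤ p) (k s : ℕ)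
    (hk1 : 1 ≤ k) (hk2 : k ≤ 2*p - 1) (hs : s ≤ k) (q : ℝ)
    (l : ℤ) (hl1 : -(p:ℤ)+1 ≤ l) (hl2 : l ≤ (p:ℤ)) :
    ∑ j ∈ Finset.Icc (-(p:ℤ)+1) (p:ℤ), gam p s q j * gam p (k-s) (j:ℝ) l
      = gam p k q l := by
  set t : Finset ℤ := Finset.Icc (-(p:ℤ)+1) (p:ℤ) with ht
  set v : ℤ → ℝ := fun i : ℤ => (i : ℝ)
  have hvinj : Set.InjOn v t := fun a _ b _ h => by
    simp only [v] at h; exact_mod_cast h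
  have hl : l ∈ t := Finset.mem_Icc.mpr ⟨hl1, hl2⟩
  set B : ℤ → ℝ[X] := fun j => Lagrange.basis t v j with hB
  set F : ℝ[X] := derivative^[k-s] (B l) with hF
  have hdegB : (B l).degree < t.card := by
    rw [Lagrange.degree_basis hvinj hl]
    exact_mod_cast Nat.sub_lt (Finset.card_pos.mpr ⟨l, hl⟩) one_pos
  have hdegF : F.degree < t.card := lt_of_le_of_lt (degree_iterate_derivative_le _ _) hdegB
  have hinterp : F = ∑ j ∈ t, C (F.eval (v j)) * B j :=
    Lagrange.eq_interpolate hvinj hdegF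
  have key : derivative^[s] F = derivative^[k] (B l) := by
    rw [hF, ← Function.iterate_add_apply]
    congr 1
    omega
  calc ∑ j ∈ t, gam p s q j * gam p (k-s) (j:ℝ) l
      = ∑ j ∈ t, (F.eval (v j)) * (derivative^[s] (B j)).eval q := by
        refine Finset.sum_congr rfl fun j _ => ?_
        rw [gam_eq, gam_eq, mul_comm]
    _ = (derivative^[s] F).eval q := by
        conv_rhs => rw [hinterp]
        rw [iterate_derivative_sum, eval_finset_sum]
        refine Finset.sum_congr rfl fun j _ => ?_
        rw [iterate_derivative_C_mul, eval_mul, eval_C]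
    _ = gam p k q l := by rw [key, gam_eq]
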